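/- Suppose for random variables X (database) and Y = Y(X) (algorithm output) there exists a set 𝓑 with P[(X,Y) ∈ 𝓑] ≤ β such that for every (x,y) ∉ 𝓑, P[X = x, Y = y] ≤ e^{t}·P[X = x]·P[Y = y]. Then the β-approximate max-information satisfies I_∞^β(X; Y) ≤ t·log₂(e). -/

import Mathlib

open MeasureTheory

lemma pmf_toMeasure_eq_sum {α : Type*} [MeasurableSpace α] (p : PMF α) :
    p.toMeasure = Measure.sum (fun a => p a • Measure.dirac a) := by
  ext s hs
  rw [PMF.toMeasure_apply p hs, Measure.sum_apply _ hs]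
  refine (tsum_congr fun a => ?_).symm
  rw [Measure.smul_apply, smul_eq_mul, Measure.dirac_apply' _ hs]
  by_cases ha : a ∈ s <;> simp [Set.indicator, ha]

lemma pmf_lintegral {α : Type*} [MeasurableSpace α] (p : PMF α) {f : α → ENNReal}
    (hf : Measurable f) : ∫⁻ a, f a ∂p.toMeasure = ∑' a, p a * f a := by
  rw [pmf_toMeasure_eq_sum, lintegral_sum_measure]
  exact tsum_congr fun a => by rw [lintegral_smul_measure, lintegral_dirac' _ hf, smul_eq_mul]

/-- If there is a set 𝓑 with P[(X,Y) ∈ 𝓑] ≤ β such that outside 𝓑 the joint density is bounded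
by e^t times the product of the marginal densities, then the β-approximate max-information
satisfies I_∞^β(X;Y) ≤ t·log₂ e; i.e., for every measurable O with P[(X,Y)∈O] > β,
P[(X,Y)∈O] − β ≤ 2^{t·log₂ e} · P[X×Y ∈ O]. -/
theorem stmt19 {α γ : Type*} [MeasurableSpace α] [MeasurableSpace γ]
    (J : PMF (α × γ)) (β t : ℝ) (hβ : 0 < β)
    (𝓑 : Set (α × γ)) (h𝓑 : J.toMeasure 𝓑 ≤ ENNReal.ofReal β)
    (hpt : ∀ p : α × γ, p ∉ 𝓑 →
      J p ≤ ENNReal.ofReal (Real.exp t) *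
        ((J.map Prod.fst) p.1 * (J.map Prod.snd) p.2)) :
    ∀ O : Set (α × γ), MeasurableSet O → β < (J.toMeasure O).toReal →
      (J.toMeasure O).toReal - β ≤
        (2 : ℝ) ^ (t * Real.logb 2 (Real.exp 1)) *
          (((J.map Prod.fst).toMeasure.prod ((J.map Prod.snd).toMeasure)) O).toReal := by
  intro O hO hOβ
  set pf := J.map Prod.fst with hpf
  set ps := J.map Prod.snd with hps
  have hexp : (2 : ℝ) ^ (t * Real.logb 2 (Real.exp 1)) = Real.exp t := by
    rw [mul_comm, Real.rpow_mul (by norm_num),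
      Real.rpow_logb (by norm_num) (by norm_num) (Real.exp_pos 1), Real.exp_one_rpow]
  have hprod : ∑' q : α × γ, O.indicator (fun q => pf q.1 * ps q.2) q
      ≤ (pf.toMeasure.prod ps.toMeasure) O := by
    rw [Measure.prod_apply hO,
      pmf_lintegral pf (measurable_measure_prodMk_left hO), ENNReal.tsum_prod']
    refine ENNReal.tsum_le_tsum fun x => ?_
    rw [PMF.toMeasure_apply ps (measurable_prodMk_left hO), ← ENNReal.tsum_mul_left]
    refine le_of_eq (tsum_congr fun y => ?_)
    by_cases h : (x, y) ∈ O <;> simp [Set.indicator, h]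
  have key : J.toMeasure O ≤ ENNReal.ofReal β +
      ENNReal.ofReal (Real.exp t) * (pf.toMeasure.prod ps.toMeasure) O := by
    rw [PMF.toMeasure_apply J hO]
    have h1 : ∑' q, O.indicator (⇑J) q ≤
        ∑' q, ((O ∩ 𝓑).indicator (⇑J) q + (O \ 𝓑).indicator (⇑J) q) := by
      refine ENNReal.tsum_le_tsum fun q => ?_
      by_cases h : q ∈ O
      · by_cases h2 : q ∈ 𝓑 <;> simp [Set.indicator, h, h2]
      · simp [Set.indicator, h]
    rw [ENNReal.tsum_add] at h1
    refine h1.trans (add_le_add ?_ ?_)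
    · calc ∑' q, (O ∩ 𝓑).indicator (⇑J) q
          = J.toOuterMeasure (O ∩ 𝓑) := (PMF.toOuterMeasure_apply J _).symm
        _ ≤ J.toOuterMeasure 𝓑 := J.toOuterMeasure.mono Set.inter_subset_right
        _ ≤ J.toMeasure 𝓑 := le_toMeasure_apply _ _ _
        _ ≤ ENNReal.ofReal β := h𝓑
    · calc ∑' q, (O \ 𝓑).indicator (⇑J) q
          ≤ ∑' q, O.indicator
              (fun q => ENNReal.ofReal (Real.exp t) * (pf q.1 * ps q.2)) q := by
            refine ENNReal.tsum_le_tsum fun q => ?_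
            by_cases h : q ∈ O \ 𝓑
            · rw [Set.indicator_of_mem h, Set.indicator_of_mem h.1]
              exact hpt q h.2
            · rw [Set.indicator_of_notMem h]
              exact zero_le
        _ = ENNReal.ofReal (Real.exp t) *
              ∑' q, O.indicator (fun q => pf q.1 * ps q.2) q := by
            rw [← ENNReal.tsum_mul_left]
            refine tsum_congr fun q => ?_
            by_cases h : q ∈ O <;> simp [Set.indicator, h]
        _ ≤ _ := mul_le_mul_right hprod _
  have hfin : (pf.toMeasure.prod ps.toMeasure) O ≠ ⊤ := measure_ne_top _ _
  have hRfin : ENNReal.ofReal β +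
      ENNReal.ofReal (Real.exp t) * (pf.toMeasure.prod ps.toMeasure) O ≠ ⊤ := by
    exact ENNReal.add_ne_top.2 ⟨ENNReal.ofReal_ne_top,
      ENNReal.mul_ne_top ENNReal.ofReal_ne_top hfin⟩
  have hmono := ENNReal.toReal_mono hRfin key
  rw [ENNReal.toReal_add ENNReal.ofReal_ne_top
      (ENNReal.mul_ne_top ENNReal.ofReal_ne_top hfin), ENNReal.toReal_mul,
    ENNReal.toReal_ofReal hβ.le, ENNReal.toReal_ofReal (Real.exp_pos t).le] at hmono
  rw [hexp]
  linarith
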